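/- arXiv:1406.0291 — 2 statements merged into one kernel-verified Lean document; each statement's English description precedes it below -/
import Mathlib

section
/- Let ζ, ν ∈ ℝ³ with ζ · ν = 0, ζ ≠ 0, ν ≠ 0. Consider the linear system in the six unknowns (x₁,…,x₆) given by: −ν₂x₄+ν₁x₅ = 0, −ν₃x₄+ν₁x₆ = 0, −ν₃x₅+ν₂x₆ = 0, −ν₂x₁+ν₁x₂−ζ₂x₄+ζ₁x₅ = 0, −ν₃x₁+ν₁x₃−ζ₃x₄+ζ₁x₆ = 0, −ν₃x₂+ν₂x₃−ζ₃x₅+ζ₂x₆ = 0, ζ₂x₁−ζ₁x₂ = 0, ζ₃x₁−ζ₁x₃ = 0, ζ₃x₂−ζ₂x₃ = 0. Then the solution space is one-dimensional and spanned by (ζ₁, ζ₂, ζ₃, ν₁, ν₂, ν₃). -/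
lemma par3 (u v : Fin 3 → ℝ) (hu : u ≠ 0)
    (h01 : u 1 * v 0 - u 0 * v 1 = 0)
    (h02 : u 2 * v 0 - u 0 * v 2 = 0)
    (h12 : u 2 * v 1 - u 1 * v 2 = 0) :
    ∃ a : ℝ, v 0 = a * u 0 ∧ v 1 = a * u 1 ∧ v 2 = a * u 2 := by
  by_cases h0 : u 0 = 0
  · by_cases h1 : u 1 = 0
    · have h2 : u 2 ≠ 0 := by
        intro h2; apply hu; funext i; fin_cases i <;> simpa using by assumption
      exact ⟨v 2 / u 2, by constructor; · field_simp; nlinarith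
                           constructor; · field_simp; nlinarith
                           · field_simp⟩
    · exact ⟨v 1 / u 1, by constructor; · field_simp; nlinarith
                           constructor; · field_simp
                           · field_simp; nlinarith⟩
  · exact ⟨v 0 / u 0, by constructor; · field_simp
                         constructor; · field_simp; nlinarith
                         · field_simp; nlinarith⟩

set_option maxHeartbeats 1000000 in
/-- the linear system (NonDegSys) for the six unknowns
`x = (g₁·ζ, g₂·ζ, g₃·ζ, g₁·ν, g₂·ν, g₃·ν)` with `ζ·ν = 0`, `ζ ≠ 0`, `ν ≠ 0`,
has solution space spanned by `(ζ₁, ζ₂, ζ₃, ν₁, ν₂, ν₃)`. -/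
theorem stmt_10 (ζ ν : Fin 3 → ℝ) (hζ : ζ ≠ 0) (hν : ν ≠ 0)
    (horth : dotProduct ζ ν = 0) :
    ∀ x : Fin 6 → ℝ,
      (-ν 1 * x 3 + ν 0 * x 4 = 0 ∧
       -ν 2 * x 3 + ν 0 * x 5 = 0 ∧
       -ν 2 * x 4 + ν 1 * x 5 = 0 ∧
       -ν 1 * x 0 + ν 0 * x 1 - ζ 1 * x 3 + ζ 0 * x 4 = 0 ∧
       -ν 2 * x 0 + ν 0 * x 2 - ζ 2 * x 3 + ζ 0 * x 5 = 0 ∧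
       -ν 2 * x 1 + ν 1 * x 2 - ζ 2 * x 4 + ζ 1 * x 5 = 0 ∧
       ζ 1 * x 0 - ζ 0 * x 1 = 0 ∧
       ζ 2 * x 0 - ζ 0 * x 2 = 0 ∧
       ζ 2 * x 1 - ζ 1 * x 2 = 0) ↔
      ∃ c : ℝ, x = c • ![ζ 0, ζ 1, ζ 2, ν 0, ν 1, ν 2] := by
  have hdot : ζ 0 * ν 0 + ζ 1 * ν 1 + ζ 2 * ν 2 = 0 := by
    simpa [dotProduct, Fin.sum_univ_three] using horth
  have v0 : ![ζ 0, ζ 1, ζ 2, ν 0, ν 1, ν 2] 0 = ζ 0 := rfl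
  have v1 : ![ζ 0, ζ 1, ζ 2, ν 0, ν 1, ν 2] 1 = ζ 1 := rfl
  have v2 : ![ζ 0, ζ 1, ζ 2, ν 0, ν 1, ν 2] 2 = ζ 2 := rfl
  have v3 : ![ζ 0, ζ 1, ζ 2, ν 0, ν 1, ν 2] 3 = ν 0 := rfl
  have v4 : ![ζ 0, ζ 1, ζ 2, ν 0, ν 1, ν 2] 4 = ν 1 := rfl
  have v5 : ![ζ 0, ζ 1, ζ 2, ν 0, ν 1, ν 2] 5 = ν 2 := rfl
  intro x
  constructor
  · rintro ⟨e1, e2, e3, e4, e5, e6, e7, e8, e9⟩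
    -- (x0,x1,x2) = a • ζ
    obtain ⟨a, ha0, ha1, ha2⟩ := par3 ζ ![x 0, x 1, x 2] hζ (by simpa using e7)
      (by simpa using e8) (by simpa using e9)
    simp only [Matrix.cons_val_zero, Matrix.cons_val_one, Matrix.head_cons,
      Matrix.cons_val_two, Matrix.tail_cons] at ha0 ha1 ha2
    -- (x3,x4,x5) = b • ν
    obtain ⟨b, hb0, hb1, hb2⟩ := par3 ν ![x 3, x 4, x 5] hν (by simp; linarith)
      (by simp; linarith) (by simp; linarith)
    simp only [Matrix.cons_val_zero, Matrix.cons_val_one, Matrix.head_cons,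
      Matrix.cons_val_two, Matrix.tail_cons] at hb0 hb1 hb2
    -- mixed equations give (a - b) * (ν × ζ) = 0
    have c01 : (a - b) * (ν 0 * ζ 1 - ν 1 * ζ 0) = 0 := by
      rw [ha0, ha1, hb0, hb1] at e4; linear_combination e4
    have c02 : (a - b) * (ν 0 * ζ 2 - ν 2 * ζ 0) = 0 := by
      rw [ha0, ha2, hb0, hb2] at e5; linear_combination e5
    have c12 : (a - b) * (ν 1 * ζ 2 - ν 2 * ζ 1) = 0 := by
      rw [ha1, ha2, hb1, hb2] at e6; linear_combination e6
    have hab : a = b := by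
      by_contra hne
      have hd : a - b ≠ 0 := sub_ne_zero.mpr hne
      have k01 : ν 1 * ζ 0 - ν 0 * ζ 1 = 0 := by
        have h := (mul_eq_zero.mp c01).resolve_left hd; linarith
      have k02 : ν 2 * ζ 0 - ν 0 * ζ 2 = 0 := by
        have h := (mul_eq_zero.mp c02).resolve_left hd; linarith
      have k12 : ν 2 * ζ 1 - ν 1 * ζ 2 = 0 := by
        have h := (mul_eq_zero.mp c12).resolve_left hd; linarith
      obtain ⟨t, ht0, ht1, ht2⟩ := par3 ν ζ hν k01 k02 k12
      have htne : t ≠ 0 := by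
        intro h; apply hζ; funext i
        fin_cases i <;> simp_all
      have hsum : t * (ν 0 ^ 2 + ν 1 ^ 2 + ν 2 ^ 2) = 0 := by
        rw [ht0, ht1, ht2] at hdot; linear_combination hdot
      have hnsq : ν 0 ^ 2 + ν 1 ^ 2 + ν 2 ^ 2 = 0 :=
        (mul_eq_zero.mp hsum).resolve_left htne
      have q0 : ν 0 ^ 2 = 0 := by linarith [sq_nonneg (ν 0), sq_nonneg (ν 1), sq_nonneg (ν 2)]
      have q1 : ν 1 ^ 2 = 0 := by linarith [sq_nonneg (ν 0), sq_nonneg (ν 1), sq_nonneg (ν 2)]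
      have q2 : ν 2 ^ 2 = 0 := by linarith [sq_nonneg (ν 0), sq_nonneg (ν 1), sq_nonneg (ν 2)]
      have n0 : ν 0 = 0 := pow_eq_zero_iff two_ne_zero |>.mp q0
      have n1 : ν 1 = 0 := pow_eq_zero_iff two_ne_zero |>.mp q1
      have n2 : ν 2 = 0 := pow_eq_zero_iff two_ne_zero |>.mp q2
      apply hν; funext i
      fin_cases i <;> [exact n0; exact n1; exact n2]
    refine ⟨a, ?_⟩
    funext i
    subst hab
    fin_cases i <;> simp only [Pi.smul_apply, smul_eq_mul, v0, v1, v2, v3, v4, v5] <;>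
      first
        | exact ha0 | exact ha1 | exact ha2 | exact hb0 | exact hb1 | exact hb2
  · rintro ⟨c, rfl⟩
    simp only [Pi.smul_apply, smul_eq_mul, v0, v1, v2, v3, v4, v5]
    refine ⟨by ring, by ring, by ring, by ring, by ring, by ring, by ring, by ring, by ring⟩
end

section
/- Let Ω ⊆ ℝⁿ be open and connected, let f: Ω → ℝ be continuous, and let a: Ω → ℝⁿ be continuous. Suppose that on the open set A = {x ∈ Ω : f(x) ≠ 0} one has that f is C¹ and ∇f(x) = f(x) a(x) for x ∈ A. If f is not identically zero, then f vanishes nowhere on Ω; in fact, for any p with f(p) ≠ 0 and any x ∈ Ω, f(x) = f(p) exp(∫ₚˣ a(y)·dy) along any path from p to x within Ω. -/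
open scoped RealInnerProductSpace

lemma aux_log_deriv {n : ℕ} {f : EuclideanSpace ℝ (Fin n) → ℝ}
    {a : EuclideanSpace ℝ (Fin n) → EuclideanSpace ℝ (Fin n)}
    {γ : ℝ → EuclideanSpace ℝ (Fin n)} {γ' : EuclideanSpace ℝ (Fin n)} {t : ℝ}
    (hne : f (γ t) ≠ 0)
    (hgrad : HasGradientAt f (f (γ t) • a (γ t)) (γ t))
    (hγ : HasDerivAt γ γ' t) :
    HasDerivAt (fun s => Real.log (f (γ s))) ⟪a (γ t), γ'⟫ t := by
  have h1 : HasDerivAt (fun s => f (γ s)) (f (γ t) * ⟪a (γ t), γ'⟫) t := by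
    have h := (hgrad.hasFDerivAt).comp_hasDerivAt t hγ
    simpa [InnerProductSpace.toDual_apply_apply, real_inner_smul_left, Function.comp_def] using h
  have h2 := (Real.hasDerivAt_log hne).comp t h1
  exact h2.congr_deriv (by field_simp)


/-- let `Ω ⊆ ℝⁿ` be open and connected, `f : Ω → ℝ` continuous,
`a : Ω → ℝⁿ` continuous, and suppose that on `A = {x ∈ Ω : f x ≠ 0}` the
function `f` is differentiable with `∇f = f a`.  If `f` is not identically zero
on `Ω`, then `f` vanishes nowhere on `Ω`, and for any `p` with `f p ≠ 0` and any
`x ∈ Ω`, along any C¹ path `γ` in `Ω` from `p` to `x` one has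
`f x = f p · exp (∫₀¹ a(γ t) · γ'(t) dt)`. -/
theorem stmt_13 (n : ℕ) (Ω : Set (EuclideanSpace ℝ (Fin n)))
    (hΩ : IsOpen Ω) (hΩc : IsConnected Ω)
    (f : EuclideanSpace ℝ (Fin n) → ℝ) (hf : ContinuousOn f Ω)
    (a : EuclideanSpace ℝ (Fin n) → EuclideanSpace ℝ (Fin n))
    (ha : ContinuousOn a Ω)
    (hgrad : ∀ x ∈ Ω, f x ≠ 0 → HasGradientAt f (f x • a x) x)
    (hnontriv : ∃ x ∈ Ω, f x ≠ 0) :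
    (∀ x ∈ Ω, f x ≠ 0) ∧
    ∀ p ∈ Ω, f p ≠ 0 → ∀ x ∈ Ω,
      ∀ γ : ℝ → EuclideanSpace ℝ (Fin n), ContDiff ℝ 1 γ →
        (∀ t ∈ Set.Icc (0 : ℝ) 1, γ t ∈ Ω) → γ 0 = p → γ 1 = x →
        f x = f p * Real.exp (∫ t in (0 : ℝ)..1, ⟪a (γ t), deriv γ t⟫) := by
  have hfc : ∀ x ∈ Ω, ContinuousAt f x := fun x hx => hf.continuousAt (hΩ.mem_nhds hx)
  -- Step 1: if f vanishes at a point of Ω, it vanishes on a ball around it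
  have key : ∀ x ∈ Ω, f x = 0 → ∃ r > 0, Metric.ball x r ⊆ Ω ∧
      ∀ y ∈ Metric.ball x r, f y = 0 := by
    intro x hx hfx
    obtain ⟨r, hr, hball⟩ := Metric.isOpen_iff.mp hΩ x hx
    refine ⟨r, hr, hball, ?_⟩
    intro y hy
    by_contra hfy
    set γ : ℝ → EuclideanSpace ℝ (Fin n) := fun t => x + t • (y - x) with hγdef
    have hγ0 : γ 0 = x := by simp [γ]
    have hγ1 : γ 1 = y := by simp [γ]
    have hγcont : Continuous γ := by fun_prop
    have hγderiv : ∀ t : ℝ, HasDerivAt γ (y - x) t := by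
      intro t
      simpa [γ] using ((hasDerivAt_id t).smul_const (y - x)).const_add x
    have hγball : ∀ t ∈ Set.Icc (0:ℝ) 1, γ t ∈ Metric.ball x r := by
      intro t ht
      have h1 : dist (γ t) x = |t| * ‖y - x‖ := by
        simp [γ, dist_eq_norm, norm_smul]
      have h2 : |t| * ‖y - x‖ ≤ ‖y - x‖ := by
        have : |t| ≤ 1 := abs_le.mpr ⟨by linarith [ht.1], ht.2⟩
        nlinarith [norm_nonneg (y - x)]
      have h3 : ‖y - x‖ < r := by
        rw [← dist_eq_norm]; exact hy
      rw [Metric.mem_ball]; linarith [h1, h2, h3]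
    -- bound for a on segment
    have hKcomp : IsCompact (γ '' Set.Icc 0 1) := (isCompact_Icc).image hγcont
    obtain ⟨C0, hC0⟩ := hKcomp.exists_bound_of_continuousOn
      (ha.mono (fun z hz => by obtain ⟨t, ht, rfl⟩ := hz; exact hball (hγball t ht)))
    set C := max C0 0 with hCdef
    set D := C * ‖y - x‖ with hDdef
    have hD0 : 0 ≤ D := mul_nonneg (le_max_right _ _) (norm_nonneg _)
    set g : ℝ → ℝ := fun t => f (γ t) with hgdef
    have hgc : ∀ t ∈ Set.Icc (0:ℝ) 1, ContinuousAt g t := fun t ht =>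
      (hfc _ (hball (hγball t ht))).comp hγcont.continuousAt
    set S := {t : ℝ | t ∈ Set.Icc (0:ℝ) 1 ∧ g t = 0} with hSdef
    have hS0 : (0:ℝ) ∈ S := ⟨Set.left_mem_Icc.mpr zero_le_one, by simp [g, hγ0, hfx]⟩
    have hSbdd : BddAbove S := ⟨1, fun t ht => ht.1.2⟩
    set t₀ := sSup S with ht₀def
    have ht₀mem : t₀ ∈ Set.Icc (0:ℝ) 1 :=
      ⟨le_csSup hSbdd hS0, csSup_le ⟨0, hS0⟩ fun t ht => ht.1.2⟩
    have hgt₀ : g t₀ = 0 := by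
      have hclos : t₀ ∈ closure S := csSup_mem_closure ⟨0, hS0⟩ hSbdd
      have hne : (nhdsWithin t₀ S).NeBot := mem_closure_iff_nhdsWithin_neBot.mp hclos
      have h1 : Filter.Tendsto g (nhdsWithin t₀ S) (nhds (g t₀)) :=
        ((hgc t₀ ht₀mem).continuousWithinAt).tendsto
      have h2 : Filter.Tendsto g (nhdsWithin t₀ S) (nhds 0) := by
        apply Filter.Tendsto.congr' _ tendsto_const_nhds
        filter_upwards [self_mem_nhdsWithin] with t ht
        exact ht.2.symm
      exact tendsto_nhds_unique h1 h2
    have hg1 : g 1 ≠ 0 := by simpa [g, hγ1] using hfy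
    have ht₀lt : t₀ < 1 := lt_of_le_of_ne ht₀mem.2 (fun h => hg1 (h ▸ hgt₀))
    have hgne : ∀ s ∈ Set.Ioc t₀ 1, g s ≠ 0 := by
      intro s hs h0
      exact absurd (le_csSup hSbdd ⟨⟨le_trans ht₀mem.1 hs.1.le, hs.2⟩, h0⟩)
        (not_le.mpr hs.1)
    have hder : ∀ s ∈ Set.Ioc t₀ 1,
        HasDerivAt (fun u => Real.log (g u)) ⟪a (γ s), y - x⟫ s := by
      intro s hs
      have hmem : γ s ∈ Ω := hball (hγball s ⟨le_trans ht₀mem.1 hs.1.le, hs.2⟩)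
      exact aux_log_deriv (hgne s hs) (hgrad _ hmem (hgne s hs)) (hγderiv s)
    have hb : ∀ s ∈ Set.Ioc t₀ 1, ‖⟪a (γ s), y - x⟫‖ ≤ D := by
      intro s hs
      calc ‖⟪a (γ s), y - x⟫‖ ≤ ‖a (γ s)‖ * ‖y - x‖ := norm_inner_le_norm _ _
        _ ≤ C * ‖y - x‖ := by
            apply mul_le_mul_of_nonneg_right _ (norm_nonneg _)
            exact le_trans (hC0 _ ⟨s, ⟨le_trans ht₀mem.1 hs.1.le, hs.2⟩, rfl⟩)
              (le_max_left _ _)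
    have hεle : ∀ s ∈ Set.Ioc t₀ 1, Real.exp (Real.log (g 1) - D) ≤ |g s| := by
      intro s hs
      have hmvt := (convex_Icc s 1).norm_image_sub_le_of_norm_hasDerivWithin_le
        (f := fun u => Real.log (g u)) (f' := fun u => ⟪a (γ u), y - x⟫)
        (fun u hu => (hder u ⟨lt_of_lt_of_le hs.1 hu.1, hu.2⟩).hasDerivWithinAt)
        (fun u hu => hb u ⟨lt_of_lt_of_le hs.1 hu.1, hu.2⟩)
        (Set.left_mem_Icc.mpr hs.2) (Set.right_mem_Icc.mpr hs.2)
      have h1s : ‖(1:ℝ) - s‖ ≤ 1 := by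
        rw [Real.norm_eq_abs, abs_of_nonneg (by linarith [hs.2])]
        have := le_trans ht₀mem.1 hs.1.le
        linarith
      have hbound : |Real.log (g 1) - Real.log (g s)| ≤ D := by
        calc |Real.log (g 1) - Real.log (g s)| ≤ D * ‖(1:ℝ) - s‖ := hmvt
          _ ≤ D * 1 := mul_le_mul_of_nonneg_left h1s hD0
          _ = D := mul_one D
      have hlogge : Real.log (g 1) - D ≤ Real.log (g s) := by
        have := abs_le.mp hbound
        linarith [this.1, this.2]
      calc Real.exp (Real.log (g 1) - D) ≤ Real.exp (Real.log (g s)) :=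
            Real.exp_le_exp.mpr hlogge
        _ = |g s| := by
            rw [← Real.log_abs]
            exact Real.exp_log (abs_pos.mpr (hgne s hs))
    have hT : Filter.Tendsto (fun s => |g s|) (nhdsWithin t₀ (Set.Ioi t₀))
        (nhds |g t₀|) := ((hgc t₀ ht₀mem).abs).continuousWithinAt.tendsto
    have hev : ∀ᶠ s in nhdsWithin t₀ (Set.Ioi t₀),
        Real.exp (Real.log (g 1) - D) ≤ |g s| := by
      filter_upwards [Ioc_mem_nhdsGT_of_mem (Set.left_mem_Ico.mpr ht₀lt)] with s hs
      exact hεle s hs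
    have hfin := ge_of_tendsto hT hev
    rw [hgt₀, abs_zero] at hfin
    exact absurd hfin (not_le.mpr (Real.exp_pos _))
  -- Step 2: connectedness argument
  have part1 : ∀ x ∈ Ω, f x ≠ 0 := by
    set A := {x | x ∈ Ω ∧ f x ≠ 0} with hAdef
    set Z := {x | x ∈ Ω ∧ f x = 0} with hZdef
    have hAopen : IsOpen A := by
      rw [isOpen_iff_mem_nhds]
      intro x hx
      refine Filter.mem_of_superset (Filter.inter_mem (hΩ.mem_nhds hx.1)
        ((hfc x hx.1).preimage_mem_nhds (compl_singleton_mem_nhds hx.2))) ?_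
      intro y hy
      exact ⟨hy.1, hy.2⟩
    have hZopen : IsOpen Z := by
      rw [Metric.isOpen_iff]
      intro x hx
      obtain ⟨r, hr, hball, hzero⟩ := key x hx.1 hx.2
      exact ⟨r, hr, fun y hy => ⟨hball hy, hzero y hy⟩⟩
    have hdisj : Disjoint A Z := Set.disjoint_left.mpr fun x hxA hxZ => hxA.2 hxZ.2
    have hsub : Ω ⊆ A ∪ Z := by
      intro x hx
      by_cases h : f x = 0
      · exact Or.inr ⟨hx, h⟩
      · exact Or.inl ⟨hx, h⟩
    obtain ⟨x0, hx0, hfx0⟩ := hnontriv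
    have := hΩc.isPreconnected.subset_left_of_subset_union hAopen hZopen hdisj hsub
      ⟨x0, hx0, hx0, hfx0⟩
    exact fun x hx => (this hx).2
  refine ⟨part1, ?_⟩
  intro p hp hfp x hx γ hγ hγΩ hγ0 hγ1
  have hγd : ∀ t : ℝ, HasDerivAt γ (deriv γ t) t := fun t =>
    (hγ.differentiable one_ne_zero t).hasDerivAt
  have hderivcont : Continuous (deriv γ) := hγ.continuous_deriv le_rfl
  have hderlog : ∀ t ∈ Set.uIcc (0:ℝ) 1,
      HasDerivAt (fun s => Real.log (f (γ s))) ⟪a (γ t), deriv γ t⟫ t := by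
    intro t ht
    rw [Set.uIcc_of_le zero_le_one] at ht
    exact aux_log_deriv (part1 _ (hγΩ t ht)) (hgrad _ (hγΩ t ht) (part1 _ (hγΩ t ht)))
      (hγd t)
  have hφcont : ContinuousOn (fun t => ⟪a (γ t), deriv γ t⟫) (Set.uIcc (0:ℝ) 1) := by
    rw [Set.uIcc_of_le zero_le_one]
    exact ContinuousOn.inner (ha.comp hγ.continuous.continuousOn hγΩ)
      hderivcont.continuousOn
  have hint : IntervalIntegrable (fun t => ⟪a (γ t), deriv γ t⟫)
      MeasureTheory.volume 0 1 := hφcont.intervalIntegrable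
  have heq := intervalIntegral.integral_eq_sub_of_hasDerivAt hderlog hint
  rw [hγ0, hγ1] at heq
  have hfx := part1 x hx
  have hsame : 0 < f p * f x := by
    by_contra h
    push_neg at h
    have hlt : f p * f x < 0 := lt_of_le_of_ne h (mul_ne_zero hfp hfx)
    have hgcont : ContinuousOn (fun t => f (γ t)) (Set.Icc (0:ℝ) 1) :=
      hf.comp hγ.continuous.continuousOn hγΩ
    rcases mul_neg_iff.mp hlt with ⟨h1, h2⟩ | ⟨h1, h2⟩
    · have h0 : (0:ℝ) ∈ Set.Icc (f (γ 1)) (f (γ 0)) := by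
        rw [hγ0, hγ1]; exact ⟨le_of_lt h2, le_of_lt h1⟩
      obtain ⟨t, ht, hgt⟩ := intermediate_value_Icc' zero_le_one hgcont h0
      exact part1 _ (hγΩ t ht) hgt
    · have h0 : (0:ℝ) ∈ Set.Icc (f (γ 0)) (f (γ 1)) := by
        rw [hγ0, hγ1]; exact ⟨le_of_lt h1, le_of_lt h2⟩
      obtain ⟨t, ht, hgt⟩ := intermediate_value_Icc zero_le_one hgcont h0
      exact part1 _ (hγΩ t ht) hgt
  rw [heq, Real.exp_sub]
  have e1 : Real.exp (Real.log (f x)) = |f x| := by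
    rw [← Real.log_abs]; exact Real.exp_log (abs_pos.mpr hfx)
  have e2 : Real.exp (Real.log (f p)) = |f p| := by
    rw [← Real.log_abs]; exact Real.exp_log (abs_pos.mpr hfp)
  rw [e1, e2]
  rcases mul_pos_iff.mp hsame with ⟨h1, h2⟩ | ⟨h1, h2⟩
  · rw [abs_of_pos h1, abs_of_pos h2]
    field_simp
  · rw [abs_of_neg h1, abs_of_neg h2]
    field_simp
end
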